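/- (Theorem 2, decay.) Assume h(τ) > 0, let q > 1, define ζ(t) := [h(τ)·ν(τ) + ∫_τ^t β(ξ)·ν(ξ) dξ]/ν(t) for t ≥ τ, and assume α(t)·σ(t)^p·(q·ζ(t))^p ≤ (q−1)·β(t) for all t ≥ τ. If additionally lim_{t→∞} ∫_τ^t γ(ξ) dξ = −∞, and either (i) the improper integral ∫_τ^∞ β(ξ)·ν(ξ) dξ converges, or (ii) γ(t) ≠ 0 for all sufficiently large t and lim_{t→∞} β(t)/γ(t) = 0, then lim_{t→∞} ‖u(t)‖ = 0. -/

import Mathlib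

open Real MeasureTheory Set Filter ComplexInnerProductSpace

/-- `ν(t) = exp(−∫₀ᵗ γ(ξ) dξ)`. -/
noncomputable def nu (γ : ℝ → ℝ) (t : ℝ) : ℝ := Real.exp (-∫ ξ in (0:ℝ)..t, γ ξ)

/-- `σ(t) = exp(−∫_{t−τ}^t γ(ξ) dξ)`. -/
noncomputable def sig (γ : ℝ → ℝ) (τ t : ℝ) : ℝ :=
  Real.exp (-∫ ξ in (t - τ)..t, γ ξ)

set_option maxHeartbeats 1000000

/-- Theorem 2.7 (Theorem 2), decay: if moreover `∫_τ^t γ → −∞` and either `∫_τ^∞ β ν < ∞` or `β/γ → 0`, then `‖u(t)‖ → 0` as `t → ∞`. -/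
theorem stmt_14
    {H : Type*} [NormedAddCommGroup H] [InnerProductSpace ℂ H]
    (τ p : ℝ) (hτ : 0 < τ) (hp : 1 < p)
    (γ α β : ℝ → ℝ)
    (hγc : Continuous γ) (hαc : Continuous α) (hβc : Continuous β)
    (hα : ∀ t, 0 ≤ α t) (hβ : ∀ t, 0 ≤ β t)
    (u : ℝ → H) (u' : ℝ → H)
    (huc : ContinuousOn u (Ici (-τ)))
    (hud : ∀ t, 0 ≤ t → HasDerivWithinAt u (u' t) (Ici (0:ℝ)) t)
    (hnd : ∀ t, 0 ≤ t → DifferentiableWithinAt ℝ (fun s => ‖u s‖) (Ici (0:ℝ)) t)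
    (huineq : ∀ t, 0 ≤ t → (⟪u t, u' t⟫).re ≤
      γ t * ‖u t‖ ^ 2 + α t * ‖u t‖ * ‖u (t - τ)‖ ^ p + β t * ‖u t‖)
    (h h' : ℝ → ℝ)
    (hh0 : ∀ t, -τ ≤ t → 0 ≤ h t)
    (hhc : ContinuousOn h (Ici (-τ)))
    (hhd : ∀ t, 0 ≤ t → HasDerivWithinAt h (h' t) (Ici (0:ℝ)) t)
    (hheq : ∀ t, 0 ≤ t → h' t = γ t * h t + α t * h (t - τ) ^ p + β t)
    (hinit : ∀ t, -τ ≤ t → t ≤ 0 → h t = ‖u t‖)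
    (hhτ : 0 < h τ)
    (q : ℝ) (hq : 1 < q)
    (ζ : ℝ → ℝ)
    (hζ : ∀ t, τ ≤ t →
      ζ t = (h τ * nu γ τ + ∫ ξ in τ..t, β ξ * nu γ ξ) / nu γ t)
    (hcond : ∀ t, τ ≤ t → α t * sig γ τ t ^ p * (q * ζ t) ^ p ≤ (q - 1) * β t)
    (hγlim : Tendsto (fun t => ∫ ξ in τ..t, γ ξ) atTop atBot)
    (halt : IntegrableOn (fun ξ => β ξ * nu γ ξ) (Ici τ) ∨
      ((∀ᶠ t in atTop, γ t ≠ 0) ∧ Tendsto (fun t => β t / γ t) atTop (nhds 0))) :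
    Tendsto (fun t => ‖u t‖) atTop (nhds 0) := by
  have hp0 : (0:ℝ) ≤ p := by linarith
  have hqpos : (0:ℝ) < q := by linarith
  -- basic facts about nu
  have hνpos : ∀ t, 0 < nu γ t := fun t => Real.exp_pos _
  have hγint : ∀ a b : ℝ, IntervalIntegrable γ volume a b := fun a b =>
    hγc.intervalIntegrable a b
  have hνd : ∀ t, HasDerivAt (nu γ) (-γ t * nu γ t) t := by
    intro t
    have h1 : HasDerivAt (fun s => ∫ ξ in (0:ℝ)..s, γ ξ) (γ t) t :=
      (hγc.integral_hasStrictDerivAt 0 t).hasDerivAt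
    have h2 := (h1.neg).exp
    show HasDerivAt (fun s => Real.exp (-∫ ξ in (0:ℝ)..s, γ ξ)) (-γ t * nu γ t) t
    simpa [nu, mul_comm] using h2
  have hνc : Continuous (nu γ) := by
    rw [continuous_iff_continuousAt]; exact fun t => (hνd t).continuousAt
  have hβνc : Continuous (fun s => β s * nu γ s) := hβc.mul hνc
  set m : ℝ → ℝ := fun t => h τ * nu γ τ + ∫ ξ in τ..t, β ξ * nu γ ξ with hm
  have hmd : ∀ t, HasDerivAt m (β t * nu γ t) t := by
    intro t
    simpa [hm] using ((hβνc.integral_hasStrictDerivAt τ t).hasDerivAt.const_add (h τ * nu γ τ))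
  have hmc : Continuous m := by
    rw [continuous_iff_continuousAt]; exact fun t => (hmd t).continuousAt
  set Z : ℝ → ℝ := fun t => m t / nu γ t with hZdef
  have hZc : Continuous Z := hmc.div hνc fun t => (hνpos t).ne'
  have hmτ : m τ = h τ * nu γ τ := by simp [hm, intervalIntegral.integral_same]
  have hZτ : Z τ = h τ := by
    have h1 : Z τ = m τ / nu γ τ := rfl
    rw [h1, hmτ, mul_div_cancel_right₀ _ (hνpos τ).ne']
  have hmnn : ∀ t, τ ≤ t → 0 ≤ m t := by
    intro t ht
    have h1 : 0 ≤ ∫ ξ in τ..t, β ξ * nu γ ξ :=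
      intervalIntegral.integral_nonneg ht fun x _ => mul_nonneg (hβ x) (hνpos x).le
    have h0 : 0 ≤ h τ * nu γ τ := mul_nonneg hhτ.le (hνpos τ).le
    simp only [hm]; linarith
  have hνσ : ∀ t : ℝ, nu γ t = nu γ (t - τ) * sig γ τ t := by
    intro t
    rw [nu, nu, sig, ← Real.exp_add]
    congr 1
    rw [← neg_add]
    congr 1
    exact (intervalIntegral.integral_add_adjacent_intervals (hγint 0 (t - τ))
      (hγint (t - τ) t)).symm
  have hIci0 : Ici (0:ℝ) ⊆ Ici (-τ) := Ici_subset_Ici.mpr (by linarith)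
  -- monotonicity of t ↦ h t * ν t on [0, ∞)
  have hwmono : MonotoneOn (fun t => h t * nu γ t) (Ici (0:ℝ)) := by
    apply monotoneOn_of_deriv_nonneg (convex_Ici 0)
      ((hhc.mono hIci0).mul hνc.continuousOn)
    · intro x hx
      rw [interior_Ici] at hx
      exact (((hhd x hx.le).hasDerivAt (Ici_mem_nhds hx)).mul
        (hνd x)).differentiableAt.differentiableWithinAt
    · intro x hx
      rw [interior_Ici] at hx
      have hx0 : (0:ℝ) < x := hx
      have hdx : HasDerivAt h (h' x) x := (hhd x hx0.le).hasDerivAt (Ici_mem_nhds hx0)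
      have hD : HasDerivAt (fun t => h t * nu γ t)
          (h' x * nu γ x + h x * (-γ x * nu γ x)) x := hdx.mul (hνd x)
      rw [show (h * nu γ) = (fun t => h t * nu γ t) from rfl, hD.deriv]
      have he : h' x * nu γ x + h x * (-γ x * nu γ x)
          = (α x * h (x - τ) ^ p + β x) * nu γ x := by
        rw [hheq x hx0.le]; ring
      rw [he]
      have h1 : 0 ≤ α x * h (x - τ) ^ p :=
        mul_nonneg (hα x) (Real.rpow_nonneg (hh0 _ (by linarith)) p)
      have h2 := hβ x
      exact mul_nonneg (by linarith) (hνpos x).le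
  have hσb : ∀ t, τ ≤ t → h (t - τ) ≤ h t * sig γ τ t := by
    intro t ht
    have h1 : h (t - τ) * nu γ (t - τ) ≤ h t * nu γ t :=
      hwmono (mem_Ici.mpr (by linarith)) (mem_Ici.mpr (by linarith)) (by linarith)
    rw [hνσ t, mul_comm (nu γ (t - τ)) (sig γ τ t), ← mul_assoc] at h1
    exact le_of_mul_le_mul_right h1 (hνpos (t - τ))
  -- derivative relation for the norm
  have hrel : ∀ x : ℝ, 0 < x →
      ‖u x‖ * deriv (fun s => ‖u s‖) x = (⟪u x, u' x⟫).re := by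
    intro x hx
    have hmem : Ici (0:ℝ) ∈ nhds x := Ici_mem_nhds hx
    have hux : HasDerivAt u (u' x) x := (hud x hx.le).hasDerivAt hmem
    have hgx : DifferentiableAt ℝ (fun s => ‖u s‖) x := (hnd x hx.le).differentiableAt hmem
    have h1 : HasDerivAt (fun s => (⟪u s, u s⟫ : ℂ)) (⟪u x, u' x⟫ + ⟪u' x, u x⟫) x :=
      hux.inner ℂ hux
    have h2 := Complex.reCLM.hasFDerivAt.comp_hasDerivAt x h1
    have e1 : (fun s => Complex.reCLM ⟪u s, u s⟫) = fun s => ‖u s‖ ^ 2 :=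
      funext fun s => by simpa using inner_self_eq_norm_sq (𝕜 := ℂ) (u s)
    have e2 : Complex.reCLM (⟪u x, u' x⟫ + ⟪u' x, u x⟫) = 2 * (⟪u x, u' x⟫).re := by
      simp only [map_add, Complex.reCLM_apply]
      rw [← inner_conj_symm (u x) (u' x), Complex.conj_re]
      ring
    simp only [Function.comp_def] at h2
    rw [e1, e2] at h2
    have h3 : HasDerivAt (fun s => ‖u s‖ ^ 2) (2 * ‖u x‖ * deriv (fun s => ‖u s‖) x) x := by
      have := hgx.hasDerivAt.fun_pow 2
      simpa [mul_comm, mul_assoc] using this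
    have := h2.unique h3
    linarith
  -- STEP A : comparison ‖u t‖ ≤ h t
  have key : ∀ n : ℕ, ∀ t : ℝ, -τ ≤ t → t ≤ (n : ℝ) * τ → ‖u t‖ ≤ h t := by
    intro n
    induction n with
    | zero =>
      intro t ht htn
      simp only [Nat.cast_zero, zero_mul] at htn
      exact (hinit t ht htn).ge
    | succ n ih =>
      intro t ht htn
      rcases le_or_gt t ((n : ℝ) * τ) with hcase | hcase
      · exact ih t ht hcase
      · push_cast at htn
        set a : ℝ := (n : ℝ) * τ with ha
        set b : ℝ := ((n : ℝ) + 1) * τ with hb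
        have ha0 : (0:ℝ) ≤ a := mul_nonneg (Nat.cast_nonneg n) hτ.le
        have hab : a < b := by rw [ha, hb]; linarith
        have htb : t ≤ b := by rw [hb]; linarith
        have hsub' : Icc a b ⊆ Ici (-τ) := fun s hs => le_trans (by linarith) hs.1
        -- uniform bound on γ over [0, b]
        obtain ⟨Γ₀, hΓ₀⟩ := (isCompact_Icc (a := (0:ℝ)) (b := b)).exists_bound_of_continuousOn
          hγc.continuousOn
        set Γ : ℝ := max Γ₀ 0 with hΓdef
        have hΓ0 : (0:ℝ) ≤ Γ := le_max_right _ _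
        have hγub : ∀ x ∈ Icc (0:ℝ) b, γ x ≤ Γ := by
          intro x hx
          have := hΓ₀ x hx
          rw [Real.norm_eq_abs] at this
          exact le_trans (le_abs_self _) (le_trans this (le_max_left _ _))
        have hγlb : ∀ x ∈ Icc (0:ℝ) b, -Γ ≤ γ x := by
          intro x hx
          have := hΓ₀ x hx
          rw [Real.norm_eq_abs] at this
          have h1 : -Γ ≤ -|γ x| := by
            have : |γ x| ≤ Γ := le_trans this (le_max_left _ _)
            linarith
          exact le_trans h1 (neg_abs_le _)
        set K : ℝ := Γ + 1 with hKdef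
        have hK : (0:ℝ) < K := by rw [hKdef]; linarith
        -- the main claim for each ε > 0
        have hclaim : ∀ ε : ℝ, 0 < ε → ∀ s ∈ Icc a b, ‖u s‖ < h s + ε * Real.exp (K * s) := by
          intro ε hε
          by_contra hcon
          push_neg at hcon
          obtain ⟨s₀, hs₀mem, hs₀⟩ := hcon
          set F : ℝ → ℝ := fun s => h s + ε * Real.exp (K * s) - ‖u s‖ with hF
          have hecont : Continuous fun s : ℝ => ε * Real.exp (K * s) :=
            continuous_const.mul ((Real.continuous_exp).comp (continuous_const.mul continuous_id))
          have hFcont : ContinuousOn F (Icc a b) :=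
            ((hhc.mono hsub').add hecont.continuousOn).sub (huc.norm.mono hsub')
          set S : Set ℝ := Icc a b ∩ F ⁻¹' Iic 0 with hS
          have hSc : IsClosed S :=
            hFcont.preimage_isClosed_of_isClosed isClosed_Icc isClosed_Iic
          have hSne : S.Nonempty := ⟨s₀, hs₀mem, by simp only [mem_preimage, mem_Iic, hF]; linarith⟩
          have hSbdd : BddBelow S := ⟨a, fun s hs => hs.1.1⟩
          set c : ℝ := sInf S with hcdef
          have hcS : c ∈ S := hSc.csInf_mem hSne hSbdd
          have hca : a ≤ c := hcS.1.1
          have hcb : c ≤ b := hcS.1.2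
          have hFc0 : F c ≤ 0 := hcS.2
          have hua : ‖u a‖ ≤ h a := ih a (by linarith) (le_refl _)
          have hFa : 0 < F a := by
            simp only [hF]
            have h2 : 0 < ε * Real.exp (K * a) := mul_pos hε (Real.exp_pos _)
            linarith
          have hac : a < c := by
            rcases lt_or_eq_of_le hca with h1 | h1
            · exact h1
            · exfalso; rw [← h1] at hFc0; linarith
          have hbefore : ∀ s, a ≤ s → s < c → 0 < F s := by
            intro s h1 h2
            by_contra hle
            push_neg at hle
            have hsS : s ∈ S := ⟨⟨h1, le_trans h2.le hcb⟩, by simpa using hle⟩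
            have := csInf_le hSbdd hsS
            rw [← hcdef] at this
            linarith
          have hc0 : 0 ≤ c := le_trans ha0 hca
          have hucpos : 0 < ‖u c‖ := by
            have h1 : 0 ≤ h c := hh0 c (by linarith)
            have h2 : 0 < ε * Real.exp (K * c) := mul_pos hε (Real.exp_pos _)
            simp only [hF] at hFc0
            linarith
          set r : ℝ := ε * Real.exp (K * a) / (Γ + 1) with hrdef
          have hrpos : 0 < r := by
            apply div_pos (mul_pos hε (Real.exp_pos _)); linarith
          -- find δ-neighbourhood where ‖u‖ > 0 and F < r
          have hev : ∀ᶠ s in nhdsWithin c (Icc a b), 0 < ‖u s‖ ∧ F s < r := by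
            have h1 : ContinuousWithinAt (fun s => ‖u s‖) (Icc a b) c :=
              (huc.norm.mono hsub') c ⟨hca, hcb⟩
            have h2 : ContinuousWithinAt F (Icc a b) c := hFcont c ⟨hca, hcb⟩
            exact (h1.eventually (eventually_gt_nhds hucpos)).and
              (h2.eventually (eventually_lt_nhds (lt_of_le_of_lt hFc0 hrpos)))
          obtain ⟨δ, hδpos, hδ⟩ := Metric.mem_nhdsWithin_iff.mp hev
          set δ' : ℝ := min (δ / 2) (c - a) with hδ'def
          have hδ'pos : 0 < δ' := lt_min (by linarith) (by linarith)
          have hδ'le : δ' ≤ δ / 2 := min_le_left _ _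
          have hδ'ca : δ' ≤ c - a := min_le_right _ _
          set d : ℝ := c - δ' with hddef
          have hda : a ≤ d := by rw [hddef]; linarith
          have hdc : d < c := by rw [hddef]; linarith
          have hgood : ∀ s ∈ Icc d c, 0 < ‖u s‖ ∧ F s < r := by
            intro s hs
            apply hδ
            constructor
            · rw [Metric.mem_ball, Real.dist_eq, abs_sub_lt_iff]
              constructor
              · have : s ≤ c := hs.2
                linarith
              · have : d ≤ s := hs.1
                rw [hddef] at this
                linarith
            · exact ⟨le_trans hda hs.1, le_trans hs.2 hcb⟩
          -- F is strictly monotone on [d, c]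
          have hFmono : StrictMonoOn F (Icc d c) := by
            apply strictMonoOn_of_deriv_pos (convex_Icc d c)
              (hFcont.mono (Icc_subset_Icc hda hcb))
            intro x hx
            rw [interior_Icc] at hx
            have hx0 : 0 < x := lt_of_le_of_lt (le_trans ha0 hda) hx.1
            have hxmem : x ∈ Icc d c := ⟨hx.1.le, hx.2.le⟩
            obtain ⟨hupos, hFxr⟩ := hgood x hxmem
            have hFxpos : 0 < F x := hbefore x (le_trans hda hx.1.le) hx.2
            have hmem : Ici (0:ℝ) ∈ nhds x := Ici_mem_nhds hx0
            have hder_h : HasDerivAt h (h' x) x := (hhd x hx0.le).hasDerivAt hmem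
            have hder_e : HasDerivAt (fun s => ε * Real.exp (K * s))
                (ε * (Real.exp (K * x) * K)) x := by
              have h1 : HasDerivAt (fun s : ℝ => K * s) K x := by
                simpa [mul_comm] using (hasDerivAt_id x).const_mul K
              exact (h1.exp).const_mul ε
            have hder_g : HasDerivAt (fun s => ‖u s‖) (deriv (fun s => ‖u s‖) x) x :=
              ((hnd x hx0.le).differentiableAt hmem).hasDerivAt
            have hFd : HasDerivAt F
                (h' x + ε * (Real.exp (K * x) * K) - deriv (fun s => ‖u s‖) x) x :=
              (hder_h.add hder_e).sub hder_g
            rw [hFd.deriv]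
            -- bound the derivative of the norm
            have hxb : x ≤ b := le_trans hx.2.le hcb
            have huineqx := huineq x hx0.le
            have hrelx := hrel x hx0
            have hgd : deriv (fun s => ‖u s‖) x
                ≤ γ x * ‖u x‖ + α x * ‖u (x - τ)‖ ^ p + β x := by
              have h1 : ‖u x‖ * deriv (fun s => ‖u s‖) x
                  ≤ ‖u x‖ * (γ x * ‖u x‖ + α x * ‖u (x - τ)‖ ^ p + β x) := by
                have hexp : ‖u x‖ * (γ x * ‖u x‖ + α x * ‖u (x - τ)‖ ^ p + β x)
                    = γ x * ‖u x‖ ^ 2 + α x * ‖u x‖ * ‖u (x - τ)‖ ^ p + β x * ‖u x‖ := by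
                  ring
                rw [hrelx, hexp]
                exact huineqx
              exact le_of_mul_le_mul_left h1 hupos
            have hu1 : ‖u (x - τ)‖ ≤ h (x - τ) := by
              apply ih (x - τ) (by linarith)
              rw [hb] at hxb
              linarith
            have hu2 : ‖u (x - τ)‖ ^ p ≤ h (x - τ) ^ p :=
              Real.rpow_le_rpow (norm_nonneg _) hu1 hp0
            have hgd2 : deriv (fun s => ‖u s‖) x
                ≤ γ x * ‖u x‖ + α x * h (x - τ) ^ p + β x := by
              have := mul_le_mul_of_nonneg_left hu2 (hα x)
              linarith
            have hgheq : ‖u x‖ = h x + ε * Real.exp (K * x) - F x := by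
              simp only [hF]; ring
            have hγxu : γ x * ‖u x‖ = γ x * h x + γ x * (ε * Real.exp (K * x)) - γ x * F x := by
              rw [hgheq]; ring
            have hγxub : γ x ≤ Γ := hγub x ⟨hx0.le, hxb⟩
            have hγxlb : -Γ ≤ γ x := hγlb x ⟨hx0.le, hxb⟩
            have e2 : (1:ℝ) ≤ K - γ x := by rw [hKdef]; linarith
            have e1 : ε * Real.exp (K * a) ≤ ε * Real.exp (K * x) := by
              apply mul_le_mul_of_nonneg_left _ hε.le
              apply Real.exp_le_exp.mpr
              apply mul_le_mul_of_nonneg_left _ hK.le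
              exact le_trans hda hx.1.le
            have e6 : ε * Real.exp (K * a) * 1 ≤ ε * Real.exp (K * x) * (K - γ x) :=
              mul_le_mul e1 e2 zero_le_one (mul_nonneg hε.le (Real.exp_pos _).le)
            have e3 : -(Γ * F x) ≤ γ x * F x := by
              have := mul_nonneg (show (0:ℝ) ≤ γ x + Γ by linarith) hFxpos.le
              linarith [this]
            have e4 : Γ * F x ≤ Γ * r := mul_le_mul_of_nonneg_left hFxr.le hΓ0
            have e5 : r * (Γ + 1) = ε * Real.exp (K * a) := by
              rw [hrdef]
              field_simp
            have hheqx := hheq x hx0.le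
            linarith [hgd2, hγxu, e3, e4, e5, e6, hheqx, hrpos]
          have hFd_pos : 0 < F d := hbefore d hda hdc
          have := hFmono ⟨le_refl d, hdc.le⟩ ⟨hdc.le, le_refl c⟩ hdc
          linarith
        -- conclude by letting ε → 0
        apply le_of_forall_pos_le_add
        intro ε hε
        have hexp : 0 < Real.exp (K * t) := Real.exp_pos _
        have := hclaim (ε / Real.exp (K * t)) (by positivity) t ⟨hcase.le, htb⟩
        rw [div_mul_cancel₀] at this
        · linarith
        · exact hexp.ne'
  have hghle : ∀ t : ℝ, -τ ≤ t → ‖u t‖ ≤ h t := by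
    intro t ht
    obtain ⟨n, hn⟩ := exists_nat_ge (t / τ)
    have : t ≤ (n : ℝ) * τ := by
      rw [div_le_iff₀ hτ] at hn
      linarith
    exact key n t ht this
  -- STEP B : h t ≤ q * ζ t for t ≥ τ
  have hB : ∀ t, τ ≤ t → h t ≤ q * Z t := by
    by_contra hcon
    push_neg at hcon
    obtain ⟨t₀, ht₀, hlt⟩ := hcon
    set D : ℝ → ℝ := fun s => q * Z s - h s with hD
    have hIciτ : Ici τ ⊆ Ici (-τ) := Ici_subset_Ici.mpr (by linarith)
    have hDc : ContinuousOn D (Ici τ) :=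
      (continuous_const.mul hZc).continuousOn.sub (hhc.mono hIciτ)
    set S : Set ℝ := Ici τ ∩ D ⁻¹' Iic 0 with hS
    have hSc : IsClosed S := hDc.preimage_isClosed_of_isClosed isClosed_Ici isClosed_Iic
    have hSne : S.Nonempty := ⟨t₀, ht₀, by simp only [mem_preimage, mem_Iic, hD]; linarith⟩
    have hSbdd : BddBelow S := ⟨τ, fun s hs => hs.1⟩
    set c : ℝ := sInf S with hcdef
    have hcS : c ∈ S := hSc.csInf_mem hSne hSbdd
    have hτc : τ ≤ c := hcS.1
    have hDc0 : D c ≤ 0 := hcS.2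
    have hDτ : 0 < D τ := by
      simp only [hD, hZτ]
      have := mul_pos (sub_pos.mpr hq) hhτ
      linarith [this]
    have hτltc : τ < c := by
      rcases lt_or_eq_of_le hτc with h1 | h1
      · exact h1
      · exfalso; rw [← h1] at hDc0; linarith
    have hbefore : ∀ s, τ ≤ s → s < c → 0 < D s := by
      intro s h1 h2
      by_contra hle
      push_neg at hle
      have hsS : s ∈ S := ⟨h1, by simpa using hle⟩
      have := csInf_le hSbdd hsS
      rw [← hcdef] at this
      linarith
    set G : ℝ → ℝ := fun s => q * m s - h s * nu γ s with hG
    have hGτ : 0 < G τ := by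
      simp only [hG, hmτ]
      have := mul_pos (mul_pos (sub_pos.mpr hq) hhτ) (hνpos τ)
      linarith [this]
    have hGc : G c ≤ 0 := by
      have h1 : q * (m c / nu γ c) - h c ≤ 0 := hDc0
      rw [sub_nonpos, ← mul_div_assoc, div_le_iff₀ (hνpos c)] at h1
      show q * m c - h c * nu γ c ≤ 0
      linarith
    have hsubτ : Icc τ c ⊆ Ici (-τ) := fun s hs => le_trans (by linarith) hs.1
    have hGmono : MonotoneOn G (Icc τ c) := by
      apply monotoneOn_of_deriv_nonneg (convex_Icc τ c)
        ((continuous_const.mul hmc).continuousOn.sub ((hhc.mono hsubτ).mul hνc.continuousOn))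
      · intro x hx
        rw [interior_Icc] at hx
        have hx0 : 0 < x := lt_trans hτ hx.1
        have hdh : HasDerivAt h (h' x) x := (hhd x hx0.le).hasDerivAt (Ici_mem_nhds hx0)
        exact (((hmd x).const_mul q).sub (hdh.mul (hνd x))).differentiableAt.differentiableWithinAt
      · intro x hx
        rw [interior_Icc] at hx
        have hτx : τ < x := hx.1
        have hx0 : 0 < x := lt_trans hτ hτx
        have hdh : HasDerivAt h (h' x) x := (hhd x hx0.le).hasDerivAt (Ici_mem_nhds hx0)
        have hGd : HasDerivAt G
            (q * (β x * nu γ x) - (h' x * nu γ x + h x * (-γ x * nu γ x))) x :=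
          ((hmd x).const_mul q).sub (hdh.mul (hνd x))
        rw [show ((fun _ : ℝ => q) * m - h * nu γ) = G from rfl, hGd.deriv]
        have hζx : ζ x = Z x := hζ x hτx.le
        have hhx : h x ≤ q * ζ x := by
          rw [hζx]
          have := hbefore x hτx.le hx.2
          simp only [hD] at this
          linarith
        have hσp : (0:ℝ) < sig γ τ x := Real.exp_pos _
        have hqζ : 0 ≤ q * ζ x := by
          rw [hζx]
          simp only [hZdef]
          exact mul_nonneg hqpos.le (div_nonneg (hmnn x hτx.le) (hνpos x).le)
        have hσx : h (x - τ) ≤ sig γ τ x * (q * ζ x) := by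
          have h1 := hσb x hτx.le
          have h2 : h x * sig γ τ x ≤ (q * ζ x) * sig γ τ x :=
            mul_le_mul_of_nonneg_right hhx hσp.le
          calc h (x - τ) ≤ h x * sig γ τ x := h1
          _ ≤ (q * ζ x) * sig γ τ x := h2
          _ = sig γ τ x * (q * ζ x) := by ring
        have hrp : h (x - τ) ^ p ≤ sig γ τ x ^ p * (q * ζ x) ^ p := by
          rw [← Real.mul_rpow hσp.le hqζ]
          exact Real.rpow_le_rpow (hh0 _ (by linarith)) hσx hp0
        have hcx := hcond x hτx.le
        have h1 : α x * h (x - τ) ^ p ≤ (q - 1) * β x := by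
          calc α x * h (x - τ) ^ p ≤ α x * (sig γ τ x ^ p * (q * ζ x) ^ p) :=
            mul_le_mul_of_nonneg_left hrp (hα x)
          _ = α x * sig γ τ x ^ p * (q * ζ x) ^ p := by ring
          _ ≤ (q - 1) * β x := hcx
        rw [hheq x hx0.le]
        have h2 : 0 ≤ ((q - 1) * β x - α x * h (x - τ) ^ p) * nu γ x :=
          mul_nonneg (by linarith) (hνpos x).le
        linarith [h2]
    have := hGmono ⟨le_refl τ, hτc⟩ ⟨hτc, le_refl c⟩ hτc
    linarith
  -- STEP C : Z → 0
  have hνtop : Tendsto (nu γ) atTop atTop := by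
    have h1 : ∀ t : ℝ, nu γ t
        = Real.exp ((-∫ ξ in (0:ℝ)..τ, γ ξ) + -(∫ ξ in τ..t, γ ξ)) := by
      intro t
      rw [nu]
      congr 1
      rw [← intervalIntegral.integral_add_adjacent_intervals (hγint 0 τ) (hγint τ t)]
      ring
    have h2 : Tendsto (fun t => (-∫ ξ in (0:ℝ)..τ, γ ξ) + -(∫ ξ in τ..t, γ ξ)) atTop atTop :=
      tendsto_atTop_add_const_left _ _ (tendsto_neg_atBot_atTop.comp hγlim)
    exact (Real.tendsto_exp_atTop.comp h2).congr fun t => (h1 t).symm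
  have hZ0 : Tendsto Z atTop (nhds 0) := by
    rcases halt with hint | ⟨hne, hlim⟩
    · have h1 : Tendsto m atTop (nhds (h τ * nu γ τ + ∫ ξ in Ioi τ, β ξ * nu γ ξ)) := by
        simp only [hm]
        exact (MeasureTheory.intervalIntegral_tendsto_integral_Ioi τ
          (hint.mono_set Ioi_subset_Ici_self) tendsto_id).const_add (h τ * nu γ τ)
      exact h1.div_atTop hνtop
    · obtain ⟨T₀, hT₀⟩ := eventually_atTop.mp hne
      have hγneg : ∀ t, T₀ ≤ t → γ t < 0 := by
        intro t ht
        rcases lt_or_gt_of_ne (hT₀ t ht) with hlt | hgt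
        · exact hlt
        · exfalso
          have hpos : ∀ s, t ≤ s → 0 < γ s := by
            intro s hs
            rcases lt_or_gt_of_ne (hT₀ s (le_trans ht hs)) with hs' | hs'
            · exfalso
              have hIVT := intermediate_value_Icc' hs hγc.continuousOn
              have h0 : (0:ℝ) ∈ Icc (γ s) (γ t) := ⟨hs'.le, hgt.le⟩
              obtain ⟨ξ, hξ, hξ0⟩ := hIVT h0
              exact hT₀ ξ (le_trans ht hξ.1) hξ0
            · exact hs'
          have hlow : ∀ r, t ≤ r → (∫ ξ in τ..t, γ ξ) ≤ ∫ ξ in τ..r, γ ξ := by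
            intro r hr
            rw [← intervalIntegral.integral_add_adjacent_intervals (hγint τ t) (hγint t r)]
            have : 0 ≤ ∫ ξ in t..r, γ ξ :=
              intervalIntegral.integral_nonneg hr fun x hx => (hpos x hx.1).le
            linarith
          have hev := (tendsto_atBot.mp hγlim) ((∫ ξ in τ..t, γ ξ) - 1)
          rw [eventually_atTop] at hev
          obtain ⟨R, hR⟩ := hev
          have h1 := hR (max R t) (le_max_left _ _)
          have h2 := hlow (max R t) (le_max_right _ _)
          linarith
      rw [Metric.tendsto_atTop]
      intro ε hε
      have hε'pos : 0 < ε / 2 := by positivity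
      obtain ⟨T₁, hT₁⟩ := Metric.tendsto_atTop.mp hlim (ε / 2) hε'pos
      set T : ℝ := max (max τ T₀) T₁ with hT
      have hTτ : τ ≤ T := le_trans (le_max_left _ _) (le_max_left _ _)
      have hβb : ∀ t, T ≤ t → β t ≤ ε / 2 * (-γ t) := by
        intro t ht
        have hγt : γ t < 0 :=
          hγneg t (le_trans (le_trans (le_max_right _ _) (le_max_left _ _)) ht)
        have hd := hT₁ t (le_trans (le_max_right _ _) ht)
        rw [Real.dist_eq, sub_zero] at hd
        have h1 : -(β t / γ t) < ε / 2 := lt_of_le_of_lt (neg_le_abs _) hd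
        have h2 : β t = β t / γ t * γ t := (div_mul_cancel₀ _ hγt.ne).symm
        have h3 := mul_pos (show 0 < ε / 2 + β t / γ t by linarith)
          (show 0 < -γ t by linarith)
        linarith [h3, h2]
      have hmT : ∀ t, T ≤ t → m t ≤ m T + ε / 2 * nu γ t := by
        intro t ht
        have hmadd : m t = m T + ∫ ξ in T..t, β ξ * nu γ ξ := by
          simp only [hm]
          rw [← intervalIntegral.integral_add_adjacent_intervals
            (hβνc.intervalIntegrable τ T) (hβνc.intervalIntegrable T t)]
          ring
        have hFTC : (∫ ξ in T..t, -γ ξ * nu γ ξ) = nu γ t - nu γ T := by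
          apply intervalIntegral.integral_eq_sub_of_hasDerivAt
          · intro x _; exact hνd x
          · exact ((hγc.neg).mul hνc).intervalIntegrable T t
        have hmono2 : (∫ ξ in T..t, β ξ * nu γ ξ) ≤ ∫ ξ in T..t, ε / 2 * (-γ ξ * nu γ ξ) := by
          apply intervalIntegral.integral_mono_on ht (hβνc.intervalIntegrable T t)
            ((((hγc.neg).mul hνc).intervalIntegrable T t).const_mul (ε / 2))
          intro x hx
          have h1 := hβb x hx.1
          have h2 := mul_le_mul_of_nonneg_right h1 (hνpos x).le
          simp only [Pi.mul_apply, Pi.neg_apply]; linarith [h2]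
        rw [intervalIntegral.integral_const_mul, hFTC] at hmono2
        have h3 := mul_pos hε'pos (hνpos T)
        rw [hmadd]
        linarith [hmono2, h3]
      obtain ⟨T₂, hT₂⟩ := Metric.tendsto_atTop.mp (tendsto_const_nhds.div_atTop hνtop
        (a := m T)) (ε / 2) hε'pos
      refine ⟨max T T₂, fun t ht => ?_⟩
      have ht1 : T ≤ t := le_trans (le_max_left _ _) ht
      have ht2 : T₂ ≤ t := le_trans (le_max_right _ _) ht
      have hτt : τ ≤ t := le_trans hTτ ht1
      have hZnn : 0 ≤ Z t := div_nonneg (hmnn t hτt) (hνpos t).le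
      have hd2 := hT₂ t ht2
      rw [Real.dist_eq, sub_zero] at hd2
      have h1 : Z t ≤ m T / nu γ t + ε / 2 := by
        have h2 := hmT t ht1
        have h4 : Z t = m t / nu γ t := rfl
        rw [h4, div_le_iff₀ (hνpos t)]
        have h5 : (m T / nu γ t + ε / 2) * nu γ t = m T + ε / 2 * nu γ t := by
          rw [add_mul, div_mul_cancel₀ _ (hνpos t).ne']
        rw [h5]
        exact h2
      have h3 : m T / nu γ t ≤ |m T / nu γ t| := le_abs_self _
      rw [Real.dist_eq, sub_zero, abs_of_nonneg hZnn]
      linarith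
  -- final squeeze
  have hfin : Tendsto (fun t => q * Z t) atTop (nhds 0) := by
    simpa using hZ0.const_mul q
  apply squeeze_zero' (Eventually.of_forall fun t => norm_nonneg _) _ hfin
  filter_upwards [eventually_ge_atTop τ] with t ht
  calc ‖u t‖ ≤ h t := hghle t (by linarith)
  _ ≤ q * Z t := hB t ht
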